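/- arXiv:1910.04361 — 2 statements merged into one kernel-verified Lean document; each statement's English description precedes it below -/
import Mathlib

section
/- Let G be a finite simple graph, let M = B(G) be its bicircular matroid, and let (U, V) be a partition of E(G). Let N be the set of vertices of G incident both with an edge of U and with an edge of V. For an independent set X ⊆ U, define its signature to be the set of pairs (V(D) ∩ N, c(D)), taken over all connected components D of G[X] with V(D) ∩ N ≠ ∅, where c(D) is true exactly when D contains a cycle. If X and X' are independent subsets of U with equal signatures, then X ∼_U X'; that is, for every Z ⊆ V, the set X ∪ Z is independent in B(G) if and only if X' ∪ Z is independent in B(G). -/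
open Set

noncomputable def mrank {α : Type*} (M : Matroid α) (X : Set α) : ℕ :=
  sSup {n | ∃ I, I ⊆ X ∧ M.Indep I ∧ I.ncard = n}

noncomputable def connVal {α : Type*} (M : Matroid α) (U : Set α) : ℕ :=
  mrank M U + mrank M (M.E \ U) - mrank M M.E

def Sim {α : Type*} (M : Matroid α) (U X X' : Set α) : Prop :=
  ∀ Z ⊆ M.E \ U, (M.Indep (X ∪ Z) ↔ M.Indep (X' ∪ Z))

def SimClassesLE {α : Type*} (M : Matroid α) (U : Set α) (k : ℕ) : Prop :=
  ∃ f : Set α → Fin k, ∀ X X' : Set α, X ⊆ U → X' ⊆ U → f X = f X' → Sim M U X X'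

structure Decomp {α : Type*} (M : Matroid α) where
  V : Type
  fin : Finite V
  T : SimpleGraph V
  conn : T.Connected
  acyc : T.IsAcyclic
  deg : ∀ v : V, (T.neighborSet v).ncard = 1 ∨ (T.neighborSet v).ncard = 3
  leafEquiv : M.E ≃ {v : V // (T.neighborSet v).ncard = 1}

def Decomp.Displays {α : Type*} {M : Matroid α} (D : Decomp M) (U : Set α) : Prop :=
  ∃ u v : D.V, D.T.Adj u v ∧
    U = {x | ∃ h : x ∈ M.E, (D.T.deleteEdges {s(u, v)}).Reachable (D.leafEquiv ⟨x, h⟩).1 u}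

def bwLE {α : Type*} (M : Matroid α) (k : ℕ) : Prop :=
  ∃ D : Decomp M, ∀ U, D.Displays U → connVal M U + 1 ≤ k

def dwLE {α : Type*} (M : Matroid α) (k : ℕ) : Prop :=
  ∃ D : Decomp M, ∀ U, D.Displays U → SimClassesLE M U k

def Pigeonhole {α : Type*} (C : Set (Matroid α)) : Prop :=
  ∀ l : ℕ, 0 < l → ∃ ρ : ℕ, ∀ M ∈ C, bwLE M l → dwLE M ρ

/-- The vertices incident with an edge of the edge set \`Y\`. -/
def edgeVerts {α : Type*} (Y : Set (Sym2 α)) : Set α := {x | ∃ e ∈ Y, x ∈ e}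

/-- Two edges are connected within the edge set \`Y\`: joined by a sequence of edges of \`Y\`,
consecutive ones sharing a vertex. -/
def EdgeConn {α : Type*} (Y : Set (Sym2 α)) (e f : Sym2 α) : Prop :=
  Relation.ReflTransGen (fun a b => a ∈ Y ∧ b ∈ Y ∧ ∃ x, x ∈ a ∧ x ∈ b) e f

/-- The connected component of the subgraph with edge set \`Y\` containing the edge \`e\`. -/
def edgeComponent {α : Type*} (Y : Set (Sym2 α)) (e : Sym2 α) : Set (Sym2 α) :=
  {f ∈ Y | EdgeConn Y e f}

/-- \`C\` is the edge set of a cycle: nonempty, connected, and every incident vertex lies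
in exactly two of its edges. -/
def IsCycleSet {α : Type*} (C : Set (Sym2 α)) : Prop :=
  C.Nonempty ∧ (∀ e ∈ C, ∀ f ∈ C, EdgeConn C e f) ∧
    ∀ x ∈ edgeVerts C, ({e ∈ C | x ∈ e}).ncard = 2

/-- Independence in the bicircular matroid B(G): every connected component of the
subgraph with edge set \`X\` contains at most one cycle. -/
def BicircIndep {α : Type*} (X : Set (Sym2 α)) : Prop :=
  ∀ e ∈ X, {C : Set (Sym2 α) | C ⊆ edgeComponent X e ∧ IsCycleSet C}.Subsingleton

/-- \`M\` is the bicircular matroid B(G). -/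
def IsBicircular {α : Type*} (G : SimpleGraph α) (M : Matroid (Sym2 α)) : Prop :=
  M.E = G.edgeSet ∧ ∀ X ⊆ G.edgeSet, (M.Indep X ↔ BicircIndep X)

/-- \`M\` is 3-connected: it has no 1-separations and no 2-separations. -/
def ThreeConnected {α : Type*} (M : Matroid α) : Prop :=
  ∀ U : Set α, U ⊆ M.E → ∀ k : ℕ, 0 < k → k < 3 →
    ¬(k ≤ U.ncard ∧ k ≤ (M.E \ U).ncard ∧ connVal M U < k)

/-- The signature of an independent set `X`: the pairs (V(D) ∩ N, "D contains a cycle")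
over components D of G[X] meeting N. -/
def bicircSig {α : Type*} (N : Set α) (X : Set (Sym2 α)) : Set (Set α × Prop) :=
  {p | ∃ e ∈ X, (edgeVerts (edgeComponent X e) ∩ N).Nonempty ∧
      p = (edgeVerts (edgeComponent X e) ∩ N,
           ∃ C : Set (Sym2 α), C ⊆ edgeComponent X e ∧ IsCycleSet C)}

namespace BC
variable {α : Type*}

lemma exists_pair (e : Sym2 α) : ∃ a b, e = s(a,b) := by
  induction e using Sym2.ind with | _ a b => exact ⟨a, b, rfl⟩

lemma mem_edgeVerts {Y : Set (Sym2 α)} {x : α} : x ∈ edgeVerts Y ↔ ∃ e ∈ Y, x ∈ e := Iff.rfl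

lemma edgeVerts_mono {Y Y' : Set (Sym2 α)} (h : Y ⊆ Y') : edgeVerts Y ⊆ edgeVerts Y' :=
  fun _ ⟨e, he, hx⟩ => ⟨e, h he, hx⟩

lemma edgeVerts_union (Y Y' : Set (Sym2 α)) :
    edgeVerts (Y ∪ Y') = edgeVerts Y ∪ edgeVerts Y' := by
  ext x
  constructor
  · rintro ⟨e, (h | h), hx⟩
    · exact Or.inl ⟨e, h, hx⟩
    · exact Or.inr ⟨e, h, hx⟩
  · rintro (⟨e, h, hx⟩ | ⟨e, h, hx⟩)
    · exact ⟨e, Or.inl h, hx⟩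
    · exact ⟨e, Or.inr h, hx⟩

lemma edgeVerts_insert (e : Sym2 α) (Y : Set (Sym2 α)) :
    edgeVerts (insert e Y) = {x | x ∈ e} ∪ edgeVerts Y := by
  rw [show insert e Y = {e} ∪ Y from rfl, edgeVerts_union]
  congr 1
  ext x; exact ⟨fun ⟨f, hf, hx⟩ => by rwa [show f = e from hf] at hx, fun hx => ⟨e, rfl, hx⟩⟩

lemma edgeVerts_pair (a b : α) : edgeVerts {s(a,b)} = {a, b} := by
  ext x
  constructor
  · rintro ⟨f, hf, hx⟩
    rw [show f = s(a,b) from hf] at hx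
    rcases Sym2.mem_iff.1 hx with h | h <;> simp [h]
  · intro hx
    refine ⟨s(a,b), rfl, ?_⟩
    rcases hx with h | h <;> simp_all

lemma mem_self_of_mem {e : Sym2 α} : ∀ x ∈ e, x ∈ e := fun _ h => h

lemma edgeConn_refl (Y : Set (Sym2 α)) (e : Sym2 α) : EdgeConn Y e e := Relation.ReflTransGen.refl

lemma edgeConn_symm {Y : Set (Sym2 α)} {e f : Sym2 α} (h : EdgeConn Y e f) : EdgeConn Y f e := by
  refine @Std.Symm.symm _ _ (@Relation.ReflTransGen.stdSymm _ _ ⟨?_⟩) _ _ h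
  rintro a b ⟨ha, hb, x, hxa, hxb⟩
  exact ⟨hb, ha, x, hxb, hxa⟩

lemma edgeConn_trans {Y : Set (Sym2 α)} {e f g : Sym2 α}
    (h : EdgeConn Y e f) (h' : EdgeConn Y f g) : EdgeConn Y e g := h.trans h'

lemma edgeConn_mono {Y Y' : Set (Sym2 α)} (hYY : Y ⊆ Y') {e f : Sym2 α}
    (h : EdgeConn Y e f) : EdgeConn Y' e f := by
  refine Relation.ReflTransGen.mono ?_ _ _ h
  rintro a b ⟨ha, hb, hx⟩
  exact ⟨hYY ha, hYY hb, hx⟩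

lemma edgeConn_single {Y : Set (Sym2 α)} {e f : Sym2 α} (he : e ∈ Y) (hf : f ∈ Y)
    {x : α} (hxe : x ∈ e) (hxf : x ∈ f) : EdgeConn Y e f :=
  Relation.ReflTransGen.single ⟨he, hf, x, hxe, hxf⟩

lemma mem_of_edgeConn_right {Y : Set (Sym2 α)} {e f : Sym2 α} (he : e ∈ Y)
    (h : EdgeConn Y e f) : f ∈ Y := by
  induction h with
  | refl => exact he
  | tail _ step _ => exact step.2.1

lemma self_mem_edgeComponent {Y : Set (Sym2 α)} {e : Sym2 α} (he : e ∈ Y) :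
    e ∈ edgeComponent Y e := ⟨he, edgeConn_refl Y e⟩

lemma edgeComponent_subset (Y : Set (Sym2 α)) (e : Sym2 α) : edgeComponent Y e ⊆ Y :=
  fun _ h => h.1

/-- closure: an edge of Y adjacent to an edge of the component is in the component -/
lemma mem_edgeComponent_of_adj {Y : Set (Sym2 α)} {e f g : Sym2 α}
    (hf : f ∈ edgeComponent Y e) (hg : g ∈ Y) {x : α} (hxf : x ∈ f) (hxg : x ∈ g) :
    g ∈ edgeComponent Y e :=
  ⟨hg, hf.2.trans (edgeConn_single hf.1 hg hxf hxg)⟩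

/-- connectivity restricts to the component -/
lemma edgeConn_restrict {Y : Set (Sym2 α)} {e f : Sym2 α} (he : e ∈ Y)
    (h : EdgeConn Y e f) : EdgeConn (edgeComponent Y e) e f := by
  induction h with
  | refl => exact edgeConn_refl _ _
  | @tail b c hb step ih =>
    obtain ⟨hbY, hcY, x, hxb, hxc⟩ := step
    have hbC : b ∈ edgeComponent Y e := ⟨hbY, hb⟩
    have hcC : c ∈ edgeComponent Y e := ⟨hcY, hb.trans (edgeConn_single hbY hcY hxb hxc)⟩
    exact ih.tail ⟨hbC, hcC, x, hxb, hxc⟩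

lemma edgeComponent_conn {Y : Set (Sym2 α)} {e : Sym2 α} (he : e ∈ Y) :
    ∀ f ∈ edgeComponent Y e, ∀ g ∈ edgeComponent Y e, EdgeConn (edgeComponent Y e) f g := by
  intro f hf g hg
  exact (edgeConn_symm (edgeConn_restrict he hf.2)).trans (edgeConn_restrict he hg.2)

lemma edgeComponent_eq_of_mem {Y : Set (Sym2 α)} {e f : Sym2 α} (he : e ∈ Y)
    (hf : f ∈ edgeComponent Y e) : edgeComponent Y f = edgeComponent Y e := by
  ext g
  constructor
  · rintro ⟨hg, hconn⟩
    exact ⟨hg, hf.2.trans hconn⟩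
  · rintro ⟨hg, hconn⟩
    exact ⟨hg, (edgeConn_symm hf.2).trans hconn⟩

/-- components sharing a vertex are equal -/
lemma edgeComponent_eq_of_shared {Y : Set (Sym2 α)} {e f : Sym2 α} (he : e ∈ Y) (hf : f ∈ Y)
    {x : α} (hxe : x ∈ e) (hxf : x ∈ f) : edgeComponent Y e = edgeComponent Y f :=
  edgeComponent_eq_of_mem hf (mem_edgeComponent_of_adj (self_mem_edgeComponent hf) he hxf hxe)

/-- the component of a member edge computed in a sandwiched subset -/
lemma edgeComponent_sandwich {Y W : Set (Sym2 α)} {e : Sym2 α} (he : e ∈ Y)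
    (hWY : W ⊆ Y) (hKW : edgeComponent Y e ⊆ W) : edgeComponent W e = edgeComponent Y e := by
  apply Set.Subset.antisymm
  · rintro g ⟨hg, hconn⟩
    exact ⟨hWY hg, edgeConn_mono hWY hconn⟩
  · rintro g hg
    refine ⟨hKW hg, ?_⟩
    exact edgeConn_mono hKW (edgeConn_restrict he hg.2)

/-- exit-chain lemma: a connection from inside S to outside S yields an adjacent pair -/
lemma exists_exit {Y S : Set (Sym2 α)} {f g : Sym2 α} (h : EdgeConn Y f g)
    (hf : f ∈ S) (hg : g ∉ S) :
    ∃ a ∈ S, ∃ b ∈ Y, b ∉ S ∧ ∃ x, x ∈ a ∧ x ∈ b := by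
  induction h with
  | refl => exact absurd hf hg
  | @tail b c hb step ih =>
    by_cases hbS : b ∈ S
    · exact ⟨b, hbS, c, step.2.1, hg, step.2.2⟩
    · obtain ⟨a, ha, b', hb', hb'S, hx⟩ := ih hbS
      exact ⟨a, ha, b', hb', hb'S, hx⟩

end BC

namespace BC
variable {α : Type*} [Finite α]

/-- Handshake: sum of degrees is twice the number of (non-loop) edges. -/
lemma sum_edeg {Y : Set (Sym2 α)} (hnl : ∀ e ∈ Y, ¬ e.IsDiag) :
    ∑ x ∈ (edgeVerts Y).toFinite.toFinset, ({e ∈ Y | x ∈ e} : Set (Sym2 α)).ncard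
      = 2 * Y.ncard := by
  classical
  set F := Y.toFinite.toFinset with hF
  set Vf := (edgeVerts Y).toFinite.toFinset with hVf
  have hmemF : ∀ e, e ∈ F ↔ e ∈ Y := fun e => Set.Finite.mem_toFinset _
  have hmemV : ∀ x, x ∈ Vf ↔ x ∈ edgeVerts Y := fun x => Set.Finite.mem_toFinset _
  have h1 : ∀ x : α, ({e ∈ Y | x ∈ e} : Set (Sym2 α)).ncard
      = (F.filter (fun e => x ∈ e)).card := by
    intro x
    rw [← Set.ncard_coe_finset]
    congr 1
    ext e
    simp [hmemF]
  calc ∑ x ∈ Vf, ({e ∈ Y | x ∈ e} : Set (Sym2 α)).ncard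
      = ∑ x ∈ Vf, ∑ e ∈ F, (if x ∈ e then 1 else 0) := by
        refine Finset.sum_congr rfl (fun x _ => ?_)
        rw [h1 x, Finset.card_filter]
    _ = ∑ e ∈ F, ∑ x ∈ Vf, (if x ∈ e then 1 else 0) := Finset.sum_comm
    _ = ∑ e ∈ F, (Vf.filter (fun x => x ∈ e)).card := by
        refine Finset.sum_congr rfl (fun e _ => ?_)
        rw [Finset.card_filter]
    _ = ∑ _e ∈ F, 2 := by
        refine Finset.sum_congr rfl (fun e he => ?_)
        have heY : e ∈ Y := (hmemF e).1 he
        obtain ⟨a, b, rfl⟩ := exists_pair e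
        have hab : a ≠ b := fun h => hnl _ heY (Sym2.mk_isDiag_iff.2 h)
        have : Vf.filter (fun x => x ∈ s(a,b)) = {a, b} := by
          ext x
          simp only [Finset.mem_filter, Finset.mem_insert, Finset.mem_singleton, hmemV,
            Sym2.mem_iff]
          constructor
          · rintro ⟨-, h⟩; exact h
          · rintro h
            exact ⟨⟨s(a,b), heY, Sym2.mem_iff.2 h⟩, h⟩
        rw [this]
        rw [Finset.card_insert_of_notMem (by simp [hab]), Finset.card_singleton]
    _ = 2 * Y.ncard := by
        rw [Finset.sum_const, smul_eq_mul, Set.ncard_eq_toFinset_card Y]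
        ring

/-- A 2-regular graph has as many vertices as edges. -/
lemma two_regular_card {C : Set (Sym2 α)} (hnl : ∀ e ∈ C, ¬ e.IsDiag)
    (h2 : ∀ x ∈ edgeVerts C, ({e ∈ C | x ∈ e} : Set (Sym2 α)).ncard = 2) :
    (edgeVerts C).ncard = C.ncard := by
  have hs := sum_edeg hnl
  rw [Finset.sum_congr rfl
    (fun x hx => h2 x ((Set.Finite.mem_toFinset _).1 hx))] at hs
  rw [Finset.sum_const, smul_eq_mul] at hs
  rw [Set.ncard_eq_toFinset_card (edgeVerts C)]
  omega

/-- Min degree 2 with one vertex of degree ≥ 3 forces |V| + 1 ≤ |E|. -/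
lemma deg3_card {S : Set (Sym2 α)} (hnl : ∀ e ∈ S, ¬ e.IsDiag)
    (h2 : ∀ x ∈ edgeVerts S, 2 ≤ ({e ∈ S | x ∈ e} : Set (Sym2 α)).ncard)
    (h3 : ∃ x ∈ edgeVerts S, 3 ≤ ({e ∈ S | x ∈ e} : Set (Sym2 α)).ncard) :
    (edgeVerts S).ncard + 1 ≤ S.ncard := by
  have hs := sum_edeg hnl
  obtain ⟨x0, hx0, hx03⟩ := h3
  have hlt : ∑ x ∈ (edgeVerts S).toFinite.toFinset, 2
      < ∑ x ∈ (edgeVerts S).toFinite.toFinset, ({e ∈ S | x ∈ e} : Set (Sym2 α)).ncard := by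
    refine Finset.sum_lt_sum
      (fun x hx => h2 x ((Set.Finite.mem_toFinset _).1 hx)) ?_
    exact ⟨x0, (Set.Finite.mem_toFinset _).2 hx0, by omega⟩
  rw [hs, Finset.sum_const, smul_eq_mul] at hlt
  rw [Set.ncard_eq_toFinset_card (edgeVerts S)]
  omega

/-- Growing a connected edge set from a nonempty subset: |S| - |V(S)| ≤ |K| - |V(K)|. -/
lemma grow {K : Set (Sym2 α)} (hconn : ∀ f ∈ K, ∀ g ∈ K, EdgeConn K f g) :
    ∀ n (S : Set (Sym2 α)), (K \ S).ncard = n → S ⊆ K → S.Nonempty →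
    S.ncard + (edgeVerts K).ncard ≤ K.ncard + (edgeVerts S).ncard := by
  intro n
  induction n using Nat.strong_induction_on with
  | _ n ih =>
    intro S hn hSK hSne
    by_cases hSK' : K ⊆ S
    · have : S = K := Set.Subset.antisymm hSK hSK'
      subst this; omega
    · obtain ⟨g, hgK, hgS⟩ := Set.not_subset.1 hSK'
      obtain ⟨f, hfS⟩ := hSne
      obtain ⟨a, haS, b, hbK, hbS, x, hxa, hxb⟩ :=
        exists_exit (hconn f (hSK hfS) g hgK) hfS hgS
      obtain ⟨p, q, rfl⟩ := exists_pair b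
      have hbdiff : s(p,q) ∈ K \ S := ⟨hbK, hbS⟩
      have hxpq : x = p ∨ x = q := Sym2.mem_iff.1 hxb
      have hxVS : x ∈ edgeVerts S := ⟨a, haS, hxa⟩
      -- the "other" endpoint
      obtain ⟨y, hy⟩ : ∃ y, edgeVerts (insert s(p,q) S) ⊆ insert y (edgeVerts S) := by
        rcases hxpq with h | h
        · refine ⟨q, ?_⟩
          rw [edgeVerts_insert]
          rintro z (hz | hz)
          · rcases Sym2.mem_iff.1 hz with h' | h'
            · exact Or.inr (h' ▸ h ▸ hxVS)
            · exact Or.inl h'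
          · exact Or.inr hz
        · refine ⟨p, ?_⟩
          rw [edgeVerts_insert]
          rintro z (hz | hz)
          · rcases Sym2.mem_iff.1 hz with h' | h'
            · exact Or.inl h'
            · exact Or.inr (h' ▸ h ▸ hxVS)
          · exact Or.inr hz
      have hcard1 : (insert s(p,q) S).ncard = S.ncard + 1 :=
        Set.ncard_insert_of_notMem hbS (Set.toFinite S)
      have hcard2 : (edgeVerts (insert s(p,q) S)).ncard ≤ (edgeVerts S).ncard + 1 :=
        le_trans (Set.ncard_le_ncard hy (Set.toFinite _)) (Set.ncard_insert_le _ _)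
      have hdn : (K \ insert s(p,q) S).ncard < n := by
        have : K \ insert s(p,q) S = (K \ S) \ {s(p,q)} := by
          ext z; simp only [Set.mem_diff, Set.mem_insert_iff, Set.mem_singleton_iff]
          tauto
        rw [this, Set.ncard_diff_singleton_of_mem hbdiff]
        have hpos : 0 < (K \ S).ncard :=
          (Set.ncard_pos (Set.toFinite _)).2 ⟨_, hbdiff⟩
        omega
      have := ih _ hdn (insert s(p,q) S) rfl
        (Set.insert_subset hbK hSK) ⟨f, Set.mem_insert_of_mem _ hfS⟩
      omega

/-- Connected nonempty: |V(K)| ≤ |K| + 1. -/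
lemma conn_verts_le {K : Set (Sym2 α)} (hconn : ∀ f ∈ K, ∀ g ∈ K, EdgeConn K f g)
    (hne : K.Nonempty) : (edgeVerts K).ncard ≤ K.ncard + 1 := by
  obtain ⟨f, hf⟩ := hne
  obtain ⟨a, b, rfl⟩ := exists_pair f
  have h := grow hconn _ {s(a,b)} rfl (Set.singleton_subset_iff.2 hf) ⟨_, rfl⟩
  have h1 : ({s(a,b)} : Set (Sym2 α)).ncard = 1 := Set.ncard_singleton _
  have h2 : (edgeVerts {s(a,b)}).ncard ≤ 2 := by
    rw [edgeVerts_pair]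
    exact le_trans (Set.ncard_insert_le _ _) (by simp [Set.ncard_singleton])
  omega

end BC

namespace BC
variable {α : Type*} [Finite α]

/-- Growing from S when a vertex-disjoint nonempty C ⊆ K also exists: strict gain. -/
lemma grow2 {K : Set (Sym2 α)} (hconn : ∀ f ∈ K, ∀ g ∈ K, EdgeConn K f g) :
    ∀ n (S C : Set (Sym2 α)), (K \ S).ncard = n → S ⊆ K → S.Nonempty →
    C ⊆ K → C.Nonempty → (∀ x, x ∈ edgeVerts S → x ∈ edgeVerts C → False) →
    (S ∪ C).ncard + (edgeVerts K).ncard + 1 ≤ K.ncard + (edgeVerts (S ∪ C)).ncard := by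
  intro n
  induction n using Nat.strong_induction_on with
  | _ n ih =>
    intro S C hn hSK hSne hCK hCne hdisj
    obtain ⟨c, hcC⟩ := hCne
    have hcS : c ∉ S := by
      intro hcS
      obtain ⟨a, b, rfl⟩ := exists_pair c
      exact hdisj a ⟨_, hcS, by simp⟩ ⟨_, hcC, by simp⟩
    obtain ⟨f, hfS⟩ := hSne
    obtain ⟨a, haS, b, hbK, hbS, x, hxa, hxb⟩ :=
      exists_exit (hconn f (hSK hfS) c (hCK hcC)) hfS hcS
    obtain ⟨p, q, rfl⟩ := exists_pair b
    have hxVS : x ∈ edgeVerts S := ⟨a, haS, hxa⟩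
    have hxpq : x = p ∨ x = q := Sym2.mem_iff.1 hxb
    have hxnC : x ∉ edgeVerts C := fun h => hdisj x hxVS h
    have hxVSC : x ∈ edgeVerts (S ∪ C) := by rw [edgeVerts_union]; exact Or.inl hxVS
    by_cases hbC : ∃ y, y ∈ s(p,q) ∧ y ∈ edgeVerts C
    · -- merging edge: both endpoints already in V(S ∪ C)
      obtain ⟨y, hyb, hyC⟩ := hbC
      have hxy : x ≠ y := fun h => hxnC (h ▸ hyC)
      have hyVSC : y ∈ edgeVerts (S ∪ C) := by rw [edgeVerts_union]; exact Or.inr hyC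
      have hbnC : s(p,q) ∉ C := fun h => hxnC ⟨_, h, hxb⟩
      have hbnSC : s(p,q) ∉ S ∪ C := fun h => h.elim hbS hbnC
      have hzxy : ∀ z ∈ s(p,q), z = x ∨ z = y := by
        intro z hz
        have hz' := Sym2.mem_iff.1 hz
        have hy' := Sym2.mem_iff.1 hyb
        rcases hz' with h1 | h1 <;> rcases hxpq with h2 | h2 <;> rcases hy' with h3 | h3 <;>
          first
            | exact Or.inl (h1.trans h2.symm)
            | exact Or.inr (h1.trans h3.symm)
            | exact absurd (h2.trans h3.symm) hxy
      have hvv : edgeVerts (insert s(p,q) (S ∪ C)) = edgeVerts (S ∪ C) := by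
        rw [edgeVerts_insert]
        apply Set.Subset.antisymm
        · rintro z (hz | hz)
          · rcases hzxy z hz with rfl | rfl
            · exact hxVSC
            · exact hyVSC
          · exact hz
        · exact Set.subset_union_right
      have hne1 : (insert s(p,q) (S ∪ C)).Nonempty :=
        ⟨f, Set.mem_insert_of_mem _ (Set.mem_union_left _ hfS)⟩
      have h := grow hconn _ (insert s(p,q) (S ∪ C)) rfl
        (Set.insert_subset hbK (Set.union_subset hSK hCK)) hne1
      rw [hvv, Set.ncard_insert_of_notMem hbnSC (Set.toFinite _)] at h
      omega
    · -- no endpoint in V(C): recurse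
      push_neg at hbC
      have hbnC : s(p,q) ∉ C := fun h => hbC p (by simp) ⟨_, h, by simp⟩
      have hbnSC : s(p,q) ∉ S ∪ C := fun h => h.elim hbS hbnC
      have hdisj' : ∀ z, z ∈ edgeVerts (insert s(p,q) S) → z ∈ edgeVerts C → False := by
        intro z hz hzC
        rw [edgeVerts_insert] at hz
        rcases hz with hz | hz
        · exact hbC z hz hzC
        · exact hdisj z hz hzC
      have hdn : (K \ insert s(p,q) S).ncard < n := by
        have heq : K \ insert s(p,q) S = (K \ S) \ {s(p,q)} := by
          ext z; simp only [Set.mem_diff, Set.mem_insert_iff, Set.mem_singleton_iff]; tauto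
        have hbdiff : s(p,q) ∈ K \ S := ⟨hbK, hbS⟩
        rw [heq, Set.ncard_diff_singleton_of_mem hbdiff]
        have hpos : 0 < (K \ S).ncard := (Set.ncard_pos (Set.toFinite _)).2 ⟨_, hbdiff⟩
        omega
      have hne1 : (insert s(p,q) S).Nonempty := ⟨f, Set.mem_insert_of_mem _ hfS⟩
      have hne2 : C.Nonempty := ⟨c, hcC⟩
      have h := ih _ hdn (insert s(p,q) S) C rfl (Set.insert_subset hbK hSK)
        hne1 hCK hne2 hdisj'
      have he1 : insert s(p,q) S ∪ C = insert s(p,q) (S ∪ C) := by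
        ext z; simp only [Set.mem_union, Set.mem_insert_iff]; tauto
      rw [he1, Set.ncard_insert_of_notMem hbnSC (Set.toFinite _)] at h
      -- vertex bound
      obtain ⟨y, hy⟩ : ∃ y, edgeVerts (insert s(p,q) (S ∪ C)) ⊆ insert y (edgeVerts (S ∪ C)) := by
        rcases hxpq with hh | hh
        · refine ⟨q, ?_⟩
          rw [edgeVerts_insert]
          rintro z (hz | hz)
          · rcases Sym2.mem_iff.1 hz with h' | h'
            · exact Or.inr (h' ▸ hh ▸ hxVSC)
            · exact Or.inl h'
          · exact Or.inr hz
        · refine ⟨p, ?_⟩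
          rw [edgeVerts_insert]
          rintro z (hz | hz)
          · rcases Sym2.mem_iff.1 hz with h' | h'
            · exact Or.inl h'
            · exact Or.inr (h' ▸ hh ▸ hxVSC)
          · exact Or.inr hz
      have hcard2 : (edgeVerts (insert s(p,q) (S ∪ C))).ncard ≤ (edgeVerts (S ∪ C)).ncard + 1 :=
        le_trans (Set.ncard_le_ncard hy (Set.toFinite _)) (Set.ncard_insert_le _ _)
      rw [edgeVerts_insert] at hcard2 h
      omega

/-- Pruning: a nonempty non-loop edge set with |V| ≤ |E| contains a nonempty subset
    with min degree 2. -/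
lemma prune {S : Set (Sym2 α)} :
    ∀ n, S.ncard = n → (∀ e ∈ S, ¬ e.IsDiag) → S.Nonempty →
    (edgeVerts S).ncard ≤ S.ncard →
    ∃ C, C ⊆ S ∧ C.Nonempty ∧ ∀ x ∈ edgeVerts C, 2 ≤ ({e ∈ C | x ∈ e} : Set (Sym2 α)).ncard := by
  intro n
  induction n using Nat.strong_induction_on generalizing S with
  | _ n ih =>
    intro hn hnl hne hcard
    by_cases hdeg : ∀ x ∈ edgeVerts S, 2 ≤ ({e ∈ S | x ∈ e} : Set (Sym2 α)).ncard
    · exact ⟨S, Set.Subset.refl S, hne, hdeg⟩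
    · push_neg at hdeg
      obtain ⟨x, hxV, hx1⟩ := hdeg
      obtain ⟨e, heS, hxe⟩ := hxV
      have hsing : ({f ∈ S | x ∈ f} : Set (Sym2 α)) = {e} := by
        have hmem : e ∈ ({f ∈ S | x ∈ f} : Set (Sym2 α)) := ⟨heS, hxe⟩
        have hle : ({f ∈ S | x ∈ f} : Set (Sym2 α)).ncard ≤ ({e} : Set (Sym2 α)).ncard := by
          rw [Set.ncard_singleton]; omega
        exact (Set.eq_of_subset_of_ncard_le (Set.singleton_subset_iff.2 hmem) hle
          (Set.toFinite _)).symm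
      set S' := S \ {e} with hS'
      have hxS' : x ∉ edgeVerts S' := by
        rintro ⟨f, ⟨hfS, hfe⟩, hxf⟩
        exact hfe (by rw [← hsing]; exact ⟨hfS, hxf⟩)
      have hVS' : edgeVerts S' ⊆ edgeVerts S \ {x} := by
        intro z hz
        refine ⟨edgeVerts_mono Set.diff_subset hz, fun h => hxS' (h ▸ hz)⟩
      have hS'ne : S'.Nonempty := by
        rcases Set.eq_empty_or_nonempty S' with h | h
        · exfalso
          have hSe : S = {e} := by
            apply Set.Subset.antisymm _ (Set.singleton_subset_iff.2 heS)
            intro f hf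
            by_contra hfe
            have hfS' : f ∈ S' := ⟨hf, hfe⟩
            rw [h] at hfS'
            exact hfS'
          obtain ⟨a, b, rfl⟩ := exists_pair e
          have hab : a ≠ b := fun h' => hnl _ heS (Sym2.mk_isDiag_iff.2 h')
          rw [hSe] at hcard
          rw [edgeVerts_pair, Set.ncard_insert_of_notMem (by simp [hab]) (Set.toFinite _),
            Set.ncard_singleton, Set.ncard_singleton] at hcard
          omega
        · exact h
      have hc1 : S'.ncard = S.ncard - 1 := Set.ncard_diff_singleton_of_mem heS
      have hxVS : x ∈ edgeVerts S := ⟨e, heS, hxe⟩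
      have hc2 : (edgeVerts S').ncard ≤ (edgeVerts S).ncard - 1 := by
        have := Set.ncard_le_ncard hVS' (Set.toFinite _)
        rwa [Set.ncard_diff_singleton_of_mem hxVS] at this
      have hpos : 0 < S.ncard := (Set.ncard_pos (Set.toFinite _)).2 hne
      have hvpos : 0 < (edgeVerts S).ncard := (Set.ncard_pos (Set.toFinite _)).2 ⟨x, hxVS⟩
      obtain ⟨C, hCS', hCne, hCdeg⟩ := ih (S := S') (S'.ncard) (by omega) rfl
        (fun f hf => hnl f (Set.diff_subset hf)) hS'ne (by omega)
      exact ⟨C, hCS'.trans Set.diff_subset, hCne, hCdeg⟩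

end BC

namespace BC
variable {α : Type*} [Finite α]

/-- Cycle extraction: a nonempty non-loop edge set with |V| ≤ |E| contains a cycle set. -/
lemma exists_cycle {S : Set (Sym2 α)} (hnl : ∀ e ∈ S, ¬ e.IsDiag) (hne : S.Nonempty)
    (hcard : (edgeVerts S).ncard ≤ S.ncard) : ∃ C, C ⊆ S ∧ IsCycleSet C := by
  classical
  set P : Set (Sym2 α) → Prop :=
    fun C => C ⊆ S ∧ C.Nonempty ∧ ∀ x ∈ edgeVerts C, 2 ≤ ({e ∈ C | x ∈ e} : Set (Sym2 α)).ncard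
    with hP
  have hPne : ∃ C, P C := by
    obtain ⟨C, h1, h2, h3⟩ := prune S.ncard rfl hnl hne hcard
    exact ⟨C, h1, h2, h3⟩
  set T : Set ℕ := {m | ∃ C, P C ∧ C.ncard = m} with hT
  have hTne : T.Nonempty := by
    obtain ⟨C, hC⟩ := hPne
    exact ⟨C.ncard, C, hC, rfl⟩
  obtain ⟨C, hPC, hCn⟩ := Nat.sInf_mem hTne
  have hmin : ∀ C', P C' → sInf T ≤ C'.ncard := fun C' h => Nat.sInf_le ⟨C', h, rfl⟩
  obtain ⟨hCS, hCne, hCdeg⟩ := hPC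
  have hCnl : ∀ e ∈ C, ¬ e.IsDiag := fun e he => hnl e (hCS he)
  -- no vertex of degree ≥ 3
  have hdeg2 : ∀ x ∈ edgeVerts C, ({e ∈ C | x ∈ e} : Set (Sym2 α)).ncard = 2 := by
    intro x hx
    by_contra hne3
    have h3 : 3 ≤ ({e ∈ C | x ∈ e} : Set (Sym2 α)).ncard := by
      have := hCdeg x hx
      omega
    have hcard3 : (edgeVerts C).ncard + 1 ≤ C.ncard := deg3_card hCnl hCdeg ⟨x, hx, h3⟩
    obtain ⟨e, heC⟩ := hCne
    have hC'ne : (C \ {e}).Nonempty := by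
      rw [Set.nonempty_iff_ne_empty]
      intro h
      have h1 : C.ncard - 1 = 0 := by
        rw [← Set.ncard_diff_singleton_of_mem heC, h, Set.ncard_empty]
      have hvpos : 0 < (edgeVerts C).ncard := by
        refine (Set.ncard_pos (Set.toFinite _)).2 ?_
        obtain ⟨a, b, rfl⟩ := exists_pair e
        exact ⟨a, _, heC, by simp⟩
      omega
    have hc1 : (C \ {e}).ncard = C.ncard - 1 :=
      Set.ncard_diff_singleton_of_mem heC
    have hcard' : (edgeVerts (C \ {e})).ncard ≤ (C \ {e}).ncard := by
      have := Set.ncard_le_ncard (edgeVerts_mono (Set.diff_subset (s := C) (t := {e})))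
        (Set.toFinite _)
      omega
    obtain ⟨C'', h1, h2, h3'⟩ := prune (C \ {e}).ncard rfl
      (fun f hf => hCnl f (Set.diff_subset hf)) hC'ne hcard'
    have hPC'' : P C'' := ⟨h1.trans (Set.diff_subset.trans hCS), h2, h3'⟩
    have := hmin C'' hPC''
    have hlt : C''.ncard ≤ C.ncard - 1 := by
      have := Set.ncard_le_ncard h1 (Set.toFinite _)
      omega
    have hCpos : 0 < C.ncard := (Set.ncard_pos (Set.toFinite _)).2 ⟨e, heC⟩
    omega
  -- connectivity
  have hcomp : ∀ e ∈ C, edgeComponent C e = C := by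
    intro e heC
    have hsub := edgeComponent_subset C e
    have hPD : P (edgeComponent C e) := by
      refine ⟨hsub.trans hCS, ⟨e, self_mem_edgeComponent heC⟩, ?_⟩
      intro x hx
      obtain ⟨f, hfD, hxf⟩ := hx
      have hDC : ({g ∈ C | x ∈ g} : Set (Sym2 α)) ⊆ {g ∈ edgeComponent C e | x ∈ g} := by
        rintro g ⟨hgC, hxg⟩
        exact ⟨mem_edgeComponent_of_adj hfD hgC hxf hxg, hxg⟩
      have := Set.ncard_le_ncard hDC (Set.toFinite _)
      have h2 := hdeg2 x ⟨f, hsub hfD, hxf⟩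
      omega
    have := hmin _ hPD
    exact Set.eq_of_subset_of_ncard_le hsub (by omega) (Set.toFinite _)
  refine ⟨C, hCS, hCne, ?_, hdeg2⟩
  intro e heC f hfC
  rw [← hcomp e heC] at hfC
  exact hfC.2

/-- If a component's cycle family is a subsingleton then |K| ≤ |V(K)|. -/
lemma comp_card_of_subsingleton {Y : Set (Sym2 α)} (hnl : ∀ e ∈ Y, ¬ e.IsDiag) {e : Sym2 α}
    (heY : e ∈ Y)
    (hss : {C : Set (Sym2 α) | C ⊆ edgeComponent Y e ∧ IsCycleSet C}.Subsingleton) :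
    (edgeComponent Y e).ncard ≤ (edgeVerts (edgeComponent Y e)).ncard := by
  set K := edgeComponent Y e with hK
  by_contra hlt
  push_neg at hlt
  have hKnl : ∀ f ∈ K, ¬ f.IsDiag := fun f hf => hnl f ((edgeComponent_subset Y e) hf)
  have hKne : K.Nonempty := ⟨e, self_mem_edgeComponent heY⟩
  obtain ⟨C1, hC1K, hC1⟩ := exists_cycle hKnl hKne (by omega)
  obtain ⟨e1, he1⟩ := hC1.1
  have hvpos : 0 < (edgeVerts K).ncard := by
    refine (Set.ncard_pos (Set.toFinite _)).2 ?_
    obtain ⟨f, hf⟩ := hKne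
    obtain ⟨a, b, rfl⟩ := exists_pair f
    exact ⟨a, _, hf, by simp⟩
  have hK'ne : (K \ {e1}).Nonempty := by
    rw [Set.nonempty_iff_ne_empty]
    intro h
    have : (K \ {e1}).ncard = K.ncard - 1 :=
      Set.ncard_diff_singleton_of_mem (hC1K he1)
    rw [h, Set.ncard_empty] at this
    omega
  have hc1 : (K \ {e1}).ncard = K.ncard - 1 :=
    Set.ncard_diff_singleton_of_mem (hC1K he1)
  have hcard' : (edgeVerts (K \ {e1})).ncard ≤ (K \ {e1}).ncard := by
    have := Set.ncard_le_ncard (edgeVerts_mono (Set.diff_subset (s := K) (t := {e1})))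
      (Set.toFinite _)
    omega
  obtain ⟨C2, hC2K, hC2⟩ := exists_cycle (fun f hf => hKnl f (Set.diff_subset hf)) hK'ne hcard'
  have hne12 : C1 ≠ C2 := by
    intro h
    have : e1 ∈ C2 := h ▸ he1
    exact (hC2K this).2 rfl
  exact hne12 (hss ⟨hC1K, hC1⟩ ⟨hC2K.trans Set.diff_subset, hC2⟩)

end BC

namespace BC
variable {α : Type*} [Finite α]

/-- Two distinct cycle sets: either a vertex of degree ≥ 3 in the union,
    or they are vertex-disjoint. -/
lemma deg3_or_disjoint {C1 C2 : Set (Sym2 α)} (h1 : IsCycleSet C1) (h2 : IsCycleSet C2)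
    (hne : C1 ≠ C2) :
    (∃ x ∈ edgeVerts (C1 ∪ C2), 3 ≤ ({e ∈ C1 ∪ C2 | x ∈ e} : Set (Sym2 α)).ncard) ∨
    (∀ x, x ∈ edgeVerts C1 → x ∈ edgeVerts C2 → False) := by
  by_cases hdeg : ∃ x ∈ edgeVerts (C1 ∪ C2), 3 ≤ ({e ∈ C1 ∪ C2 | x ∈ e} : Set (Sym2 α)).ncard
  · exact Or.inl hdeg
  · push_neg at hdeg
    right
    intro x hx1 hx2
    -- closure: degrees in union equal degrees in each cycle
    have closure : ∀ (C : Set (Sym2 α)), IsCycleSet C → C ⊆ C1 ∪ C2 →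
        ∀ y ∈ edgeVerts C, ({e ∈ C1 ∪ C2 | y ∈ e} : Set (Sym2 α)) = {e ∈ C | y ∈ e} := by
      intro C hC hCsub y hy
      have hsub : ({e ∈ C | y ∈ e} : Set (Sym2 α)) ⊆ {e ∈ C1 ∪ C2 | y ∈ e} := by
        rintro g ⟨hg, hyg⟩; exact ⟨hCsub hg, hyg⟩
      have hyu : y ∈ edgeVerts (C1 ∪ C2) := edgeVerts_mono hCsub hy
      have hle : ({e ∈ C1 ∪ C2 | y ∈ e} : Set (Sym2 α)).ncard ≤
          ({e ∈ C | y ∈ e} : Set (Sym2 α)).ncard := by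
        have ha := hdeg y hyu
        have hb := hC.2.2 y hy
        omega
      exact (Set.eq_of_subset_of_ncard_le hsub hle (Set.toFinite _)).symm
    have cl1 := closure C1 h1 Set.subset_union_left
    have cl2 := closure C2 h2 Set.subset_union_right
    -- find a common edge
    obtain ⟨f2, hf2C2, hxf2⟩ := hx2
    have hf2C1 : f2 ∈ C1 := by
      have : f2 ∈ ({e ∈ C1 ∪ C2 | x ∈ e} : Set (Sym2 α)) := ⟨Or.inr hf2C2, hxf2⟩
      rw [cl1 x hx1] at this
      exact this.1
    -- C2 ⊆ C1
    have hC21 : C2 ⊆ C1 := by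
      intro g hg
      have hconn := h2.2.1 f2 hf2C2 g hg
      clear hg
      induction hconn with
      | refl => exact hf2C1
      | @tail b c hb step ih =>
        obtain ⟨hbC2, hcC2, y, hyb, hyc⟩ := step
        have hbC1 : b ∈ C1 := ih
        have hyV1 : y ∈ edgeVerts C1 := ⟨b, hbC1, hyb⟩
        have : c ∈ ({e ∈ C1 ∪ C2 | y ∈ e} : Set (Sym2 α)) := ⟨Or.inr hcC2, hyc⟩
        rw [cl1 y hyV1] at this
        exact this.1
    -- C1 ⊆ C2
    have hC12 : C1 ⊆ C2 := by
      intro g hg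
      have hconn := h1.2.1 f2 hf2C1 g hg
      clear hg
      induction hconn with
      | refl => exact hf2C2
      | @tail b c hb step ih =>
        obtain ⟨hbC1, hcC1, y, hyb, hyc⟩ := step
        have hbC2 : b ∈ C2 := ih
        have hyV2 : y ∈ edgeVerts C2 := ⟨b, hbC2, hyb⟩
        have : c ∈ ({e ∈ C1 ∪ C2 | y ∈ e} : Set (Sym2 α)) := ⟨Or.inl hcC1, hyc⟩
        rw [cl2 y hyV2] at this
        exact this.1
    exact hne (Set.Subset.antisymm hC12 hC21)

/-- If |K| ≤ |V(K)| for a connected K then cycle sets within K form a subsingleton. -/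
lemma subsingleton_of_card {K : Set (Sym2 α)} (hnl : ∀ e ∈ K, ¬ e.IsDiag)
    (hconn : ∀ f ∈ K, ∀ g ∈ K, EdgeConn K f g)
    (hcard : K.ncard ≤ (edgeVerts K).ncard) :
    {C : Set (Sym2 α) | C ⊆ K ∧ IsCycleSet C}.Subsingleton := by
  rintro C1 ⟨hC1K, hC1⟩ C2 ⟨hC2K, hC2⟩
  by_contra hne
  rcases deg3_or_disjoint hC1 hC2 hne with ⟨x, hxV, hx3⟩ | hdisj
  · -- degree ≥ 3 case
    set S := C1 ∪ C2 with hS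
    have hSsub : S ⊆ K := Set.union_subset hC1K hC2K
    have hSnl : ∀ e ∈ S, ¬ e.IsDiag := fun e he => hnl e (hSsub he)
    have hSdeg : ∀ y ∈ edgeVerts S, 2 ≤ ({e ∈ S | y ∈ e} : Set (Sym2 α)).ncard := by
      rintro y ⟨f, hf, hyf⟩
      rcases hf with hf | hf
      · have h2 := hC1.2.2 y ⟨f, hf, hyf⟩
        have hsub : ({e ∈ C1 | y ∈ e} : Set (Sym2 α)) ⊆ {e ∈ S | y ∈ e} := by
          rintro g ⟨hg, hyg⟩; exact ⟨Or.inl hg, hyg⟩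
        have := Set.ncard_le_ncard hsub (Set.toFinite _)
        omega
      · have h2 := hC2.2.2 y ⟨f, hf, hyf⟩
        have hsub : ({e ∈ C2 | y ∈ e} : Set (Sym2 α)) ⊆ {e ∈ S | y ∈ e} := by
          rintro g ⟨hg, hyg⟩; exact ⟨Or.inr hg, hyg⟩
        have := Set.ncard_le_ncard hsub (Set.toFinite _)
        omega
    have hScard := deg3_card hSnl hSdeg ⟨x, hxV, hx3⟩
    obtain ⟨f1, hf1⟩ := hC1.1
    have hSne : S.Nonempty := ⟨f1, Or.inl hf1⟩
    have := grow hconn (K \ S).ncard S rfl hSsub hSne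
    omega
  · -- vertex-disjoint case
    have hd12 : ∀ x, x ∈ edgeVerts C1 → x ∈ edgeVerts C2 → False := hdisj
    have hC1ne := hC1.1
    have hC2ne := hC2.1
    have h := grow2 hconn (K \ C1).ncard C1 C2 rfl hC1K hC1ne hC2K hC2ne hd12
    -- |C1 ∪ C2| = |V(C1 ∪ C2)|
    have hnl1 : ∀ e ∈ C1, ¬ e.IsDiag := fun e he => hnl e (hC1K he)
    have hnl2 : ∀ e ∈ C2, ¬ e.IsDiag := fun e he => hnl e (hC2K he)
    have he1 := two_regular_card hnl1 hC1.2.2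
    have he2 := two_regular_card hnl2 hC2.2.2
    have hedisj : Disjoint C1 C2 := by
      rw [Set.disjoint_iff_inter_eq_empty]
      ext g
      simp only [Set.mem_inter_iff, Set.mem_empty_iff_false, iff_false, not_and]
      intro hg1 hg2
      obtain ⟨a, b, rfl⟩ := exists_pair g
      exact hd12 a ⟨_, hg1, by simp⟩ ⟨_, hg2, by simp⟩
    have hvdisj : Disjoint (edgeVerts C1) (edgeVerts C2) := by
      rw [Set.disjoint_iff_inter_eq_empty]
      ext y
      simp only [Set.mem_inter_iff, Set.mem_empty_iff_false, iff_false, not_and]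
      exact fun hy1 hy2 => hd12 y hy1 hy2
    have hcu : (C1 ∪ C2).ncard = C1.ncard + C2.ncard :=
      Set.ncard_union_eq hedisj (Set.toFinite _) (Set.toFinite _)
    have hvu : (edgeVerts (C1 ∪ C2)).ncard = (edgeVerts C1).ncard + (edgeVerts C2).ncard := by
      rw [edgeVerts_union]
      exact Set.ncard_union_eq hvdisj (Set.toFinite _) (Set.toFinite _)
    omega

/-- Characterization: independence in the bicircular sense ↔ every component
    has at most as many edges as vertices. -/
lemma indep_iff_good {Y : Set (Sym2 α)} (hnl : ∀ e ∈ Y, ¬ e.IsDiag) :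
    BicircIndep Y ↔ ∀ e ∈ Y,
      (edgeComponent Y e).ncard ≤ (edgeVerts (edgeComponent Y e)).ncard := by
  constructor
  · intro h e he
    exact comp_card_of_subsingleton hnl he (h e he)
  · intro h e he
    have hKnl : ∀ f ∈ edgeComponent Y e, ¬ f.IsDiag :=
      fun f hf => hnl f ((edgeComponent_subset Y e) hf)
    exact subsingleton_of_card hKnl (edgeComponent_conn he) (h e he)

/-- Cycle flag: for a connected K with |K| ≤ |V(K)|,
    K contains a cycle iff |K| = |V(K)|. -/
lemma flag_iff {K : Set (Sym2 α)} (hnl : ∀ e ∈ K, ¬ e.IsDiag)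
    (hconn : ∀ f ∈ K, ∀ g ∈ K, EdgeConn K f g) (hne : K.Nonempty)
    (hcard : K.ncard ≤ (edgeVerts K).ncard) :
    (∃ C, C ⊆ K ∧ IsCycleSet C) ↔ K.ncard = (edgeVerts K).ncard := by
  constructor
  · rintro ⟨C, hCK, hC⟩
    have hnlC : ∀ e ∈ C, ¬ e.IsDiag := fun e he => hnl e (hCK he)
    have h1 := two_regular_card hnlC hC.2.2
    have h2 := grow hconn (K \ C).ncard C rfl hCK hC.1
    omega
  · intro h
    exact exists_cycle hnl hne (by omega)

end BC

namespace BC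
variable {α : Type*} [Finite α]

lemma edgeVerts_empty : edgeVerts (∅ : Set (Sym2 α)) = ∅ := by
  ext x; simp [edgeVerts]

lemma edgeComponent_mono {Y Y' : Set (Sym2 α)} (hYY' : Y ⊆ Y') (f : Sym2 α) :
    edgeComponent Y f ⊆ edgeComponent Y' f :=
  fun _ hg => ⟨hYY' hg.1, edgeConn_mono hYY' hg.2⟩

/-- A component of a subset W sits inside the component of the large set. -/
lemma comp_sub_comp {Ybig W : Set (Sym2 α)} {e f : Sym2 α} (he : e ∈ Ybig)
    (hW : W ⊆ Ybig) (hf : f ∈ edgeComponent Ybig e) :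
    edgeComponent W f ⊆ edgeComponent Ybig e := by
  rw [← edgeComponent_eq_of_mem he hf]
  exact edgeComponent_mono hW f

/-- Uniqueness: components with a common vertex in their traces are equal. -/
lemma trace_unique {W : Set (Sym2 α)} {f g : Sym2 α} (hf : f ∈ W) (hg : g ∈ W)
    {x : α} (hxf : x ∈ edgeVerts (edgeComponent W f)) (hxg : x ∈ edgeVerts (edgeComponent W g)) :
    edgeComponent W f = edgeComponent W g := by
  obtain ⟨e1, he1, hxe1⟩ := hxf
  obtain ⟨e2, he2, hxe2⟩ := hxg
  have h1 : e2 ∈ edgeComponent W f :=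
    mem_edgeComponent_of_adj he1 ((edgeComponent_subset W g) he2) hxe1 hxe2
  have h2 : edgeComponent W e2 = edgeComponent W f := edgeComponent_eq_of_mem hf h1
  have h3 : edgeComponent W e2 = edgeComponent W g := edgeComponent_eq_of_mem hg he2
  rw [← h2, h3]

/-- Components with the same cycle flag on both sides have matching edge/vertex balance. -/
lemma matched_size {W W' : Set (Sym2 α)} (hWnl : ∀ e ∈ W, ¬e.IsDiag)
    (hW'nl : ∀ e ∈ W', ¬e.IsDiag) (hW : BicircIndep W) (hW' : BicircIndep W')
    {f f' : Sym2 α} (hf : f ∈ W) (hf' : f' ∈ W')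
    (hflag : (∃ C, C ⊆ edgeComponent W f ∧ IsCycleSet C) ↔
             (∃ C, C ⊆ edgeComponent W' f' ∧ IsCycleSet C)) :
    (edgeComponent W f).ncard + (edgeVerts (edgeComponent W' f')).ncard
      = (edgeComponent W' f').ncard + (edgeVerts (edgeComponent W f)).ncard := by
  have hKnl : ∀ e ∈ edgeComponent W f, ¬e.IsDiag :=
    fun e he => hWnl e ((edgeComponent_subset W f) he)
  have hK'nl : ∀ e ∈ edgeComponent W' f', ¬e.IsDiag :=
    fun e he => hW'nl e ((edgeComponent_subset W' f') he)
  have h1 : (edgeComponent W f).ncard ≤ (edgeVerts (edgeComponent W f)).ncard :=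
    (indep_iff_good hWnl).1 hW f hf
  have h1' : (edgeComponent W' f').ncard ≤ (edgeVerts (edgeComponent W' f')).ncard :=
    (indep_iff_good hW'nl).1 hW' f' hf'
  have h2 : (edgeVerts (edgeComponent W f)).ncard ≤ (edgeComponent W f).ncard + 1 :=
    conn_verts_le (edgeComponent_conn hf) ⟨f, self_mem_edgeComponent hf⟩
  have h2' : (edgeVerts (edgeComponent W' f')).ncard ≤ (edgeComponent W' f').ncard + 1 :=
    conn_verts_le (edgeComponent_conn hf') ⟨f', self_mem_edgeComponent hf'⟩
  have hfi := flag_iff hKnl (edgeComponent_conn hf) ⟨f, self_mem_edgeComponent hf⟩ h1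
  have hfi' := flag_iff hK'nl (edgeComponent_conn hf') ⟨f', self_mem_edgeComponent hf'⟩ h1'
  by_cases hc : ∃ C, C ⊆ edgeComponent W f ∧ IsCycleSet C
  · have ha := hfi.1 (by obtain ⟨C, hC1, hC2⟩ := hc; exact ⟨C, hC1, hC2⟩)
    have hb := hfi'.1 (by obtain ⟨C, hC1, hC2⟩ := hflag.1 hc; exact ⟨C, hC1, hC2⟩)
    omega
  · have ha : (edgeComponent W f).ncard ≠ (edgeVerts (edgeComponent W f)).ncard := by
      intro h
      exact hc (by obtain ⟨C, hC1, hC2⟩ := hfi.2 h; exact ⟨C, hC1, hC2⟩)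
    have hc' : ¬ ∃ C, C ⊆ edgeComponent W' f' ∧ IsCycleSet C := fun h => hc (hflag.2 h)
    have hb : (edgeComponent W' f').ncard ≠ (edgeVerts (edgeComponent W' f')).ncard := by
      intro h
      exact hc' (by obtain ⟨C, hC1, hC2⟩ := hfi'.2 h; exact ⟨C, hC1, hC2⟩)
    omega

/-- Exchange count over a finite family of matched, pairwise disjoint components. -/
lemma union_count (𝒯 : Set (Set α)) (h𝒯 : 𝒯.Finite) (D D' : Set α → Set (Sym2 α)) :
    (∀ T ∈ 𝒯, (D T).ncard + (edgeVerts (D' T)).ncard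
        = (D' T).ncard + (edgeVerts (D T)).ncard) →
    (∀ T1 ∈ 𝒯, ∀ T2 ∈ 𝒯, T1 ≠ T2 →
        Disjoint (D T1) (D T2) ∧ Disjoint (edgeVerts (D T1)) (edgeVerts (D T2))) →
    (∀ T1 ∈ 𝒯, ∀ T2 ∈ 𝒯, T1 ≠ T2 →
        Disjoint (D' T1) (D' T2) ∧ Disjoint (edgeVerts (D' T1)) (edgeVerts (D' T2))) →
    (⋃ T ∈ 𝒯, D T).ncard + (edgeVerts (⋃ T ∈ 𝒯, D' T)).ncard
      = (⋃ T ∈ 𝒯, D' T).ncard + (edgeVerts (⋃ T ∈ 𝒯, D T)).ncard := by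
  refine Set.Finite.induction_on (motive := fun 𝒮 _ =>
      (∀ T ∈ 𝒮, (D T).ncard + (edgeVerts (D' T)).ncard
          = (D' T).ncard + (edgeVerts (D T)).ncard) →
      (∀ T1 ∈ 𝒮, ∀ T2 ∈ 𝒮, T1 ≠ T2 →
          Disjoint (D T1) (D T2) ∧ Disjoint (edgeVerts (D T1)) (edgeVerts (D T2))) →
      (∀ T1 ∈ 𝒮, ∀ T2 ∈ 𝒮, T1 ≠ T2 →
          Disjoint (D' T1) (D' T2) ∧ Disjoint (edgeVerts (D' T1)) (edgeVerts (D' T2))) →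
      (⋃ T ∈ 𝒮, D T).ncard + (edgeVerts (⋃ T ∈ 𝒮, D' T)).ncard
        = (⋃ T ∈ 𝒮, D' T).ncard + (edgeVerts (⋃ T ∈ 𝒮, D T)).ncard) 𝒯 h𝒯 ?_ ?_
  · intro _ _ _; simp [edgeVerts_empty]
  · rintro T0 𝒯 hT0 h𝒯fin ih hsize hdisjD hdisjD'
    have key : ∀ (E : Set α → Set (Sym2 α)),
        (∀ T1 ∈ insert T0 𝒯, ∀ T2 ∈ insert T0 𝒯, T1 ≠ T2 →
          Disjoint (E T1) (E T2) ∧ Disjoint (edgeVerts (E T1)) (edgeVerts (E T2))) →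
        (⋃ T ∈ insert T0 𝒯, E T).ncard = (E T0).ncard + (⋃ T ∈ 𝒯, E T).ncard ∧
        (edgeVerts (⋃ T ∈ insert T0 𝒯, E T)).ncard
          = (edgeVerts (E T0)).ncard + (edgeVerts (⋃ T ∈ 𝒯, E T)).ncard := by
      intro E hd
      have hbu : (⋃ T ∈ insert T0 𝒯, E T) = E T0 ∪ ⋃ T ∈ 𝒯, E T := by
        simp [Set.biUnion_insert]
      have hdisj1 : Disjoint (E T0) (⋃ T ∈ 𝒯, E T) := by
        rw [Set.disjoint_iff_inter_eq_empty]
        ext g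
        simp only [Set.mem_inter_iff, Set.mem_iUnion, Set.mem_empty_iff_false, iff_false,
          not_and, not_exists]
        intro hg T hT hgT
        have hne : T0 ≠ T := fun h => hT0 (h ▸ hT)
        exact Set.disjoint_left.1 (hd T0 (Set.mem_insert _ _) T (Set.mem_insert_of_mem _ hT)
          hne).1 hg hgT
      have hVU : edgeVerts (⋃ T ∈ 𝒯, E T) = ⋃ T ∈ 𝒯, edgeVerts (E T) := by
        ext x
        constructor
        · rintro ⟨g, hg, hxg⟩
          simp only [Set.mem_iUnion] at hg ⊢
          obtain ⟨T, hT, hgT⟩ := hg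
          exact ⟨T, hT, g, hgT, hxg⟩
        · intro hx
          simp only [Set.mem_iUnion] at hx
          obtain ⟨T, hT, g, hgT, hxg⟩ := hx
          exact ⟨g, Set.mem_iUnion.2 ⟨T, by simp [hT, hgT]⟩, hxg⟩
      have hdisj2 : Disjoint (edgeVerts (E T0)) (edgeVerts (⋃ T ∈ 𝒯, E T)) := by
        rw [hVU, Set.disjoint_iff_inter_eq_empty]
        ext x
        simp only [Set.mem_inter_iff, Set.mem_iUnion, Set.mem_empty_iff_false, iff_false,
          not_and, not_exists]
        intro hx T hT hxT
        have hne : T0 ≠ T := fun h => hT0 (h ▸ hT)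
        exact Set.disjoint_left.1 (hd T0 (Set.mem_insert _ _) T (Set.mem_insert_of_mem _ hT)
          hne).2 hx hxT
      constructor
      · rw [hbu, Set.ncard_union_eq hdisj1 (Set.toFinite _) (Set.toFinite _)]
      · rw [hbu, edgeVerts_union, Set.ncard_union_eq hdisj2 (Set.toFinite _) (Set.toFinite _)]
    obtain ⟨hD1, hD2⟩ := key D hdisjD
    obtain ⟨hD'1, hD'2⟩ := key D' hdisjD'
    have hsz0 := hsize T0 (Set.mem_insert _ _)
    have ihs := ih (fun T hT => hsize T (Set.mem_insert_of_mem _ hT))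
      (fun T1 h1 T2 h2 h12 => hdisjD T1 (Set.mem_insert_of_mem _ h1) T2
        (Set.mem_insert_of_mem _ h2) h12)
      (fun T1 h1 T2 h2 h12 => hdisjD' T1 (Set.mem_insert_of_mem _ h1) T2
        (Set.mem_insert_of_mem _ h2) h12)
    omega

end BC

namespace BC
variable {α : Type*} [Finite α]

lemma main_swap (U V X X' Z : Set (Sym2 α))
    (hnl : ∀ e ∈ U ∪ V, ¬ e.IsDiag)
    (hUV : Disjoint U V)
    (hXU : X ⊆ U) (hX'U : X' ⊆ U) (hZV : Z ⊆ V)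
    (hX : BicircIndep X) (hX' : BicircIndep X')
    (hsig : bicircSig {x : α | (∃ e ∈ U, x ∈ e) ∧ ∃ e ∈ V, x ∈ e} X
          = bicircSig {x : α | (∃ e ∈ U, x ∈ e) ∧ ∃ e ∈ V, x ∈ e} X')
    (hInd : BicircIndep (X ∪ Z)) : BicircIndep (X' ∪ Z) := by
  classical
  set N := {x : α | (∃ e ∈ U, x ∈ e) ∧ ∃ e ∈ V, x ∈ e} with hNdef
  have hXnl : ∀ e ∈ X, ¬ e.IsDiag := fun e he => hnl e (Or.inl (hXU he))
  have hX'nl : ∀ e ∈ X', ¬ e.IsDiag := fun e he => hnl e (Or.inl (hX'U he))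
  have hXZnl : ∀ e ∈ X ∪ Z, ¬ e.IsDiag := by
    rintro e (he | he)
    · exact hnl e (Or.inl (hXU he))
    · exact hnl e (Or.inr (hZV he))
  have hX'Znl : ∀ e ∈ X' ∪ Z, ¬ e.IsDiag := by
    rintro e (he | he)
    · exact hnl e (Or.inl (hX'U he))
    · exact hnl e (Or.inr (hZV he))
  have hNmem : ∀ (x : α) (eu ev : Sym2 α), eu ∈ U → ev ∈ V → x ∈ eu → x ∈ ev → x ∈ N :=
    fun x eu ev h1 h2 h3 h4 => ⟨⟨eu, h1, h3⟩, ⟨ev, h2, h4⟩⟩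
  rw [indep_iff_good hX'Znl]
  intro e he
  by_cases hBZ : ∃ b, b ∈ edgeComponent (X' ∪ Z) e ∧ b ∈ Z
  case neg =>
    push_neg at hBZ
    have heX' : e ∈ X' := by
      rcases he with h | h
      · exact h
      · exact absurd h (hBZ e (self_mem_edgeComponent (Or.inr h)))
    have hKsub : edgeComponent (X' ∪ Z) e ⊆ X' := by
      intro g hg
      rcases hg.1 with h | h
      · exact h
      · exact absurd h (hBZ g hg)
    have hcomp : edgeComponent X' e = edgeComponent (X' ∪ Z) e :=
      edgeComponent_sandwich he Set.subset_union_left hKsub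
    rw [← hcomp]
    exact (indep_iff_good hX'nl).1 hX' e heX'
  case pos =>
  obtain ⟨b, hbK', hbZ⟩ := hBZ
  haveI : Nonempty (Sym2 α) := ⟨b⟩
  have hKe : edgeComponent (X' ∪ Z) b = edgeComponent (X' ∪ Z) e :=
    edgeComponent_eq_of_mem he hbK'
  rw [← hKe]
  have hbXZ' : b ∈ X' ∪ Z := Or.inr hbZ
  have hbXZ : b ∈ X ∪ Z := Or.inr hbZ
  set Kb := edgeComponent (X' ∪ Z) b with hKbdef
  have hbKb : b ∈ Kb := self_mem_edgeComponent hbXZ'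
  set B := Kb ∩ Z with hBdef
  set A' := Kb ∩ X' with hA'def
  have hbB : b ∈ B := ⟨hbKb, hbZ⟩
  have hKbsplit : Kb = B ∪ A' := by
    ext g
    constructor
    · intro hg
      rcases (edgeComponent_subset _ _ hg : g ∈ X' ∪ Z) with h | h
      · exact Or.inr ⟨hg, h⟩
      · exact Or.inl ⟨hg, h⟩
    · rintro (h | h)
      · exact h.1
      · exact h.1
  -- each X'-component inside Kb meets N
  have hc2 : ∀ f ∈ A', (edgeVerts (edgeComponent X' f) ∩ N).Nonempty := by
    rintro f ⟨hfKb, hfX'⟩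
    have hconnfb : EdgeConn (X' ∪ Z) f b := by
      have h1 : EdgeConn Kb f b := edgeComponent_conn hbXZ' f hfKb b hbKb
      exact edgeConn_mono (edgeComponent_subset _ _) h1
    have hbnot : b ∉ edgeComponent X' f := fun h =>
      Set.disjoint_left.1 hUV (hX'U ((edgeComponent_subset X' f) h)) (hZV hbZ)
    obtain ⟨a, ha, g, hgXZ, hgnot, x, hxa, hxg⟩ :=
      exists_exit hconnfb (self_mem_edgeComponent hfX') hbnot
    have hgZ : g ∈ Z := by
      rcases hgXZ with h | h
      · exact absurd (mem_edgeComponent_of_adj ha h hxa hxg) hgnot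
      · exact h
    have haX' : a ∈ X' := (edgeComponent_subset X' f) ha
    exact ⟨x, ⟨a, ha, hxa⟩, hNmem x a g (hX'U haX') (hZV hgZ) hxa hxg⟩
  set 𝒯 : Set (Set α) := {T | ∃ f ∈ A', T = edgeVerts (edgeComponent X' f) ∩ N} with h𝒯def
  set A : Set (Sym2 α) := {f ∈ X | edgeVerts (edgeComponent X f) ∩ N ∈ 𝒯} with hAdef
  -- partner existence from the signature
  have hpart : ∀ f ∈ A', ∃ g, g ∈ X ∧
      edgeVerts (edgeComponent X g) ∩ N = edgeVerts (edgeComponent X' f) ∩ N ∧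
      ((∃ C, C ⊆ edgeComponent X g ∧ IsCycleSet C) ↔
       (∃ C, C ⊆ edgeComponent X' f ∧ IsCycleSet C)) := by
    intro f hf
    have hmem : ((edgeVerts (edgeComponent X' f) ∩ N,
        (∃ C, C ⊆ edgeComponent X' f ∧ IsCycleSet C)) : Set α × Prop) ∈ bicircSig N X' :=
      ⟨f, hf.2, hc2 f hf, rfl⟩
    rw [← hsig] at hmem
    obtain ⟨g, hgX, hgne, heq⟩ := hmem
    have h1 : edgeVerts (edgeComponent X' f) ∩ N = edgeVerts (edgeComponent X g) ∩ N :=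
      congrArg Prod.fst heq
    have h2 : (∃ C, C ⊆ edgeComponent X' f ∧ IsCycleSet C)
        = (∃ C, C ⊆ edgeComponent X g ∧ IsCycleSet C) := congrArg Prod.snd heq
    exact ⟨g, hgX, h1.symm, (iff_of_eq h2).symm⟩
  choose! pg hpg1 hpg2 hpg3 using hpart
  -- closure: the (X ∪ Z)-component of b is contained in B ∪ A
  have hsub1 : edgeComponent (X ∪ Z) b ⊆ B ∪ A := by
    have key : ∀ g, EdgeConn (X ∪ Z) b g → g ∈ B ∪ A := by
      intro g hconn
      induction hconn with
      | refl => exact Or.inl hbB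
      | @tail c d hc step ih =>
        obtain ⟨hcXZ, hdXZ, x, hxc, hxd⟩ := step
        have hcS : c ∈ B ∪ A := ih
        rcases hdXZ with hdX | hdZ
        · rcases hcS with hcB | hcA
          · -- c ∈ B, d ∈ X
            have hxN : x ∈ N := hNmem x d c (hXU hdX) (hZV hcB.2) hxd hxc
            have htne : (edgeVerts (edgeComponent X d) ∩ N).Nonempty :=
              ⟨x, ⟨d, self_mem_edgeComponent hdX, hxd⟩, hxN⟩
            have hmem : ((edgeVerts (edgeComponent X d) ∩ N,
                (∃ C, C ⊆ edgeComponent X d ∧ IsCycleSet C)) : Set α × Prop) ∈ bicircSig N X :=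
              ⟨d, hdX, htne, rfl⟩
            rw [hsig] at hmem
            obtain ⟨f', hf'X', hf'ne, heq⟩ := hmem
            have h1 : edgeVerts (edgeComponent X d) ∩ N
                = edgeVerts (edgeComponent X' f') ∩ N := congrArg Prod.fst heq
            have hx' : x ∈ edgeVerts (edgeComponent X' f') ∩ N := by
              rw [← h1]
              exact ⟨⟨d, self_mem_edgeComponent hdX, hxd⟩, hxN⟩
            obtain ⟨⟨h0, hh0, hxh0⟩, -⟩ := hx'
            have hh0X' : h0 ∈ X' := (edgeComponent_subset X' f') hh0
            have hh0Kb : h0 ∈ Kb := mem_edgeComponent_of_adj hcB.1 (Or.inl hh0X') hxc hxh0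
            have hcompeq : edgeComponent X' h0 = edgeComponent X' f' :=
              edgeComponent_eq_of_mem hf'X' hh0
            refine Or.inr ⟨hdX, ⟨h0, ⟨hh0Kb, hh0X'⟩, ?_⟩⟩
            rw [hcompeq]
            exact h1
          · -- c ∈ A, d ∈ X
            have hcX : c ∈ X := hcA.1
            have hcompeq : edgeComponent X c = edgeComponent X d :=
              edgeComponent_eq_of_shared hcX hdX hxc hxd
            refine Or.inr ⟨hdX, ?_⟩
            rw [← hcompeq]
            exact hcA.2
        · rcases hcS with hcB | hcA
          · -- c ∈ B, d ∈ Z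
            have hdKb : d ∈ Kb := mem_edgeComponent_of_adj hcB.1 (Or.inr hdZ) hxc hxd
            exact Or.inl ⟨hdKb, hdZ⟩
          · -- c ∈ A, d ∈ Z
            have hcX : c ∈ X := hcA.1
            have hxN : x ∈ N := hNmem x c d (hXU hcX) (hZV hdZ) hxc hxd
            obtain ⟨f, hfA', hTeq⟩ := hcA.2
            have hx' : x ∈ edgeVerts (edgeComponent X' f) ∩ N := by
              rw [← hTeq]
              exact ⟨⟨c, self_mem_edgeComponent hcX, hxc⟩, hxN⟩
            obtain ⟨⟨h0, hh0, hxh0⟩, -⟩ := hx'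
            have hh0Kb : h0 ∈ Kb := comp_sub_comp hbXZ' Set.subset_union_left hfA'.1 hh0
            have hdKb : d ∈ Kb := mem_edgeComponent_of_adj hh0Kb (Or.inr hdZ) hxh0 hxd
            exact Or.inl ⟨hdKb, hdZ⟩
    exact fun g hg => key g hg.2
  -- the invariant: reaching back into X ∪ Z
  have hInv : ∀ g, EdgeConn (X' ∪ Z) b g →
      (g ∈ Z → EdgeConn (X ∪ Z) b g) ∧
      (g ∈ X' → ∀ h ∈ edgeComponent X (pg g), EdgeConn (X ∪ Z) b h) := by
    intro g hconn
    induction hconn with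
    | refl =>
      constructor
      · intro _
        exact edgeConn_refl _ _
      · intro hbX'
        exact absurd (hZV hbZ) (Set.disjoint_left.1 hUV (hX'U hbX'))
    | @tail c d hc step ih =>
      obtain ⟨hcXZ', hdXZ', x, hxc, hxd⟩ := step
      have hcKb : c ∈ Kb := ⟨hcXZ', hc⟩
      have hdKb : d ∈ Kb :=
        ⟨hdXZ', Relation.ReflTransGen.tail hc ⟨hcXZ', hdXZ', x, hxc, hxd⟩⟩
      constructor
      · intro hdZ
        rcases hcXZ' with hcX' | hcZ
        · have hcA' : c ∈ A' := ⟨hcKb, hcX'⟩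
          have hxN : x ∈ N := hNmem x c d (hX'U hcX') (hZV hdZ) hxc hxd
          have htr := hpg2 c hcA'
          have hx' : x ∈ edgeVerts (edgeComponent X (pg c)) ∩ N := by
            rw [htr]
            exact ⟨⟨c, self_mem_edgeComponent hcX', hxc⟩, hxN⟩
          obtain ⟨⟨h0, hh0, hxh0⟩, -⟩ := hx'
          have hconn0 : EdgeConn (X ∪ Z) b h0 := ih.2 hcX' h0 hh0
          exact Relation.ReflTransGen.tail hconn0
            ⟨Or.inl ((edgeComponent_subset X (pg c)) hh0), Or.inr hdZ, x, hxh0, hxd⟩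
        · exact Relation.ReflTransGen.tail (ih.1 hcZ) ⟨Or.inr hcZ, Or.inr hdZ, x, hxc, hxd⟩
      · intro hdX'
        have hdA' : d ∈ A' := ⟨hdKb, hdX'⟩
        rcases hcXZ' with hcX' | hcZ
        · have hcA' : c ∈ A' := ⟨hcKb, hcX'⟩
          have hcompeq : edgeComponent X' c = edgeComponent X' d :=
            edgeComponent_eq_of_shared hcX' hdX' hxc hxd
          have htrc := hpg2 c hcA'
          have htrd := hpg2 d hdA'
          have htr_eq : edgeVerts (edgeComponent X (pg c)) ∩ N
              = edgeVerts (edgeComponent X (pg d)) ∩ N := by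
            rw [htrc, htrd, hcompeq]
          obtain ⟨y, hy⟩ : (edgeVerts (edgeComponent X (pg d)) ∩ N).Nonempty := by
            rw [htrd]
            exact hc2 d hdA'
          have hy2 : y ∈ edgeVerts (edgeComponent X (pg c)) ∩ N := by
            rw [htr_eq]
            exact hy
          have hcomps : edgeComponent X (pg c) = edgeComponent X (pg d) :=
            trace_unique (hpg1 c hcA') (hpg1 d hdA') hy2.1 hy.1
          intro h hh
          refine ih.2 hcX' h ?_
          rw [hcomps]
          exact hh
        · have hxN : x ∈ N := hNmem x d c (hX'U hdX') (hZV hcZ) hxd hxc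
          have htrd := hpg2 d hdA'
          have hx' : x ∈ edgeVerts (edgeComponent X (pg d)) ∩ N := by
            rw [htrd]
            exact ⟨⟨d, self_mem_edgeComponent hdX', hxd⟩, hxN⟩
          obtain ⟨⟨h0, hh0, hxh0⟩, -⟩ := hx'
          have hbh0 : EdgeConn (X ∪ Z) b h0 :=
            Relation.ReflTransGen.tail (ih.1 hcZ)
              ⟨Or.inr hcZ, Or.inl ((edgeComponent_subset X (pg d)) hh0), x, hxc, hxh0⟩
          intro h hh
          have hcc : EdgeConn (edgeComponent X (pg d)) h0 h :=
            edgeComponent_conn (hpg1 d hdA') h0 hh0 h hh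
          exact edgeConn_trans hbh0
            (edgeConn_mono (fun w hw => Or.inl ((edgeComponent_subset X (pg d)) hw)) hcc)
  have hsub2 : B ∪ A ⊆ edgeComponent (X ∪ Z) b := by
    rintro g (hgB | hgA)
    · have hconn' : EdgeConn (X' ∪ Z) b g := hgB.1.2
      exact ⟨Or.inr hgB.2, (hInv g hconn').1 hgB.2⟩
    · obtain ⟨hgX, f, hfA', hTeq⟩ := hgA
      have hconnf : EdgeConn (X' ∪ Z) b f := hfA'.1.2
      have h2 := (hInv f hconnf).2 hfA'.2
      have htr := hpg2 f hfA'
      have htr2 : edgeVerts (edgeComponent X (pg f)) ∩ N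
          = edgeVerts (edgeComponent X g) ∩ N := by
        rw [htr, ← hTeq]
      obtain ⟨y, hy⟩ : (edgeVerts (edgeComponent X g) ∩ N).Nonempty := by
        rw [hTeq]
        exact hc2 f hfA'
      have hy2 : y ∈ edgeVerts (edgeComponent X (pg f)) ∩ N := by
        rw [htr2]
        exact hy
      have hcomps : edgeComponent X (pg f) = edgeComponent X g :=
        trace_unique (hpg1 f hfA') hgX hy2.1 hy.1
      have hgin : g ∈ edgeComponent X (pg f) := by
        rw [hcomps]
        exact self_mem_edgeComponent hgX
      exact ⟨Or.inl hgX, h2 g hgin⟩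
  have hSeq : edgeComponent (X ∪ Z) b = B ∪ A := Set.Subset.antisymm hsub1 hsub2
  have hgood : (B ∪ A).ncard ≤ (edgeVerts (B ∪ A)).ncard := by
    rw [← hSeq]
    exact (indep_iff_good hXZnl).1 hInd b hbXZ
  -- disjointness of the pieces
  have hBA : Disjoint B A := by
    rw [Set.disjoint_left]
    intro g hgB hgA
    exact Set.disjoint_left.1 hUV (hXU hgA.1) (hZV hgB.2)
  have hBA' : Disjoint B A' := by
    rw [Set.disjoint_left]
    intro g hgB hgA'
    exact Set.disjoint_left.1 hUV (hX'U hgA'.2) (hZV hgB.2)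
  -- overlap equality
  have hAA'1 : ∀ x, x ∈ edgeVerts A → x ∈ N → x ∈ edgeVerts A' := by
    rintro x ⟨f, hfA, hxf⟩ hxN
    obtain ⟨hfX, f', hf'A', hTeq⟩ := hfA
    have hx' : x ∈ edgeVerts (edgeComponent X' f') ∩ N := by
      rw [← hTeq]
      exact ⟨⟨f, self_mem_edgeComponent hfX, hxf⟩, hxN⟩
    obtain ⟨⟨h0, hh0, hxh0⟩, -⟩ := hx'
    have hh0Kb : h0 ∈ Kb := comp_sub_comp hbXZ' Set.subset_union_left hf'A'.1 hh0
    exact ⟨h0, ⟨hh0Kb, (edgeComponent_subset X' f') hh0⟩, hxh0⟩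
  have hAA'2 : ∀ x, x ∈ edgeVerts A' → x ∈ N → x ∈ edgeVerts A := by
    rintro x ⟨f, hfA', hxf⟩ hxN
    have hT : edgeVerts (edgeComponent X' f) ∩ N ∈ 𝒯 := ⟨f, hfA', rfl⟩
    have htr := hpg2 f hfA'
    have hx' : x ∈ edgeVerts (edgeComponent X (pg f)) ∩ N := by
      rw [htr]
      exact ⟨⟨f, self_mem_edgeComponent hfA'.2, hxf⟩, hxN⟩
    obtain ⟨⟨h0, hh0, hxh0⟩, -⟩ := hx'
    have hh0X : h0 ∈ X := (edgeComponent_subset X (pg f)) hh0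
    have hcompeq : edgeComponent X h0 = edgeComponent X (pg f) :=
      edgeComponent_eq_of_mem (hpg1 f hfA') hh0
    refine ⟨h0, ⟨hh0X, ?_⟩, hxh0⟩
    rw [hcompeq, htr]
    exact hT
  have hover : edgeVerts B ∩ edgeVerts A = edgeVerts B ∩ edgeVerts A' := by
    ext x
    constructor
    · rintro ⟨hxB, hxA⟩
      obtain ⟨eb, hebB, hxeb⟩ := hxB
      obtain ⟨ea, heaA, hxea⟩ := hxA
      have hxN : x ∈ N := hNmem x ea eb (hXU heaA.1) (hZV hebB.2) hxea hxeb
      exact ⟨⟨eb, hebB, hxeb⟩, hAA'1 x ⟨ea, heaA, hxea⟩ hxN⟩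
    · rintro ⟨hxB, hxA'⟩
      obtain ⟨eb, hebB, hxeb⟩ := hxB
      obtain ⟨ea, heaA', hxea⟩ := hxA'
      have hxN : x ∈ N := hNmem x ea eb (hX'U heaA'.2) (hZV hebB.2) hxea hxeb
      exact ⟨⟨eb, hebB, hxeb⟩, hAA'2 x ⟨ea, heaA', hxea⟩ hxN⟩
  -- witnesses for 𝒯
  have hwit : ∀ T ∈ 𝒯, ∃ f, f ∈ A' ∧ T = edgeVerts (edgeComponent X' f) ∩ N := by
    rintro T ⟨f, h1, h2⟩
    exact ⟨f, h1, h2⟩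
  choose! w hw1 hw2 using hwit
  have hD'tr : ∀ T ∈ 𝒯, edgeVerts (edgeComponent X' (w T)) ∩ N = T :=
    fun T hT => (hw2 T hT).symm
  have hDtr : ∀ T ∈ 𝒯, edgeVerts (edgeComponent X (pg (w T))) ∩ N = T := by
    intro T hT
    rw [hpg2 (w T) (hw1 T hT), hD'tr T hT]
  have hTne : ∀ T ∈ 𝒯, T.Nonempty := by
    intro T hT
    have := hc2 (w T) (hw1 T hT)
    rw [hD'tr T hT] at this
    exact this
  -- A and A' as unions over 𝒯
  have hAeq : A = ⋃ T ∈ 𝒯, edgeComponent X (pg (w T)) := by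
    ext g
    constructor
    · rintro ⟨hgX, hgT⟩
      have h1 := hDtr _ hgT
      obtain ⟨y, hy⟩ := hTne _ hgT
      have hy1 : y ∈ edgeVerts (edgeComponent X (pg (w (edgeVerts (edgeComponent X g) ∩ N)))) ∩ N := by
        rw [h1]
        exact hy
      have hcomps := trace_unique (hpg1 _ (hw1 _ hgT)) hgX hy1.1 hy.1
      simp only [Set.mem_iUnion]
      refine ⟨edgeVerts (edgeComponent X g) ∩ N, hgT, ?_⟩
      rw [hcomps]
      exact self_mem_edgeComponent hgX
    · intro hg
      simp only [Set.mem_iUnion] at hg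
      obtain ⟨T, hT, hgD⟩ := hg
      have hgX : g ∈ X := (edgeComponent_subset _ _) hgD
      have hcompeq : edgeComponent X g = edgeComponent X (pg (w T)) :=
        edgeComponent_eq_of_mem (hpg1 (w T) (hw1 T hT)) hgD
      refine ⟨hgX, ?_⟩
      rw [hcompeq, hDtr T hT]
      exact hT
  have hA'eq : A' = ⋃ T ∈ 𝒯, edgeComponent X' (w T) := by
    ext g
    constructor
    · intro hgA'
      have hT : edgeVerts (edgeComponent X' g) ∩ N ∈ 𝒯 := ⟨g, hgA', rfl⟩
      have h1 := hD'tr _ hT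
      obtain ⟨y, hy⟩ := hTne _ hT
      have hy1 : y ∈ edgeVerts (edgeComponent X' (w (edgeVerts (edgeComponent X' g) ∩ N))) ∩ N := by
        rw [h1]
        exact hy
      have hcomps := trace_unique ((hw1 _ hT).2) hgA'.2 hy1.1 hy.1
      simp only [Set.mem_iUnion]
      refine ⟨edgeVerts (edgeComponent X' g) ∩ N, hT, ?_⟩
      rw [hcomps]
      exact self_mem_edgeComponent hgA'.2
    · intro hg
      simp only [Set.mem_iUnion] at hg
      obtain ⟨T, hT, hgD⟩ := hg
      have hgKb : g ∈ Kb := comp_sub_comp hbXZ' Set.subset_union_left (hw1 T hT).1 hgD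
      exact ⟨hgKb, (edgeComponent_subset _ _) hgD⟩
  -- pairwise disjointness
  have hvdX : ∀ T1 ∈ 𝒯, ∀ T2 ∈ 𝒯, T1 ≠ T2 → ∀ x,
      x ∈ edgeVerts (edgeComponent X (pg (w T1))) →
      x ∈ edgeVerts (edgeComponent X (pg (w T2))) → False := by
    intro T1 h1 T2 h2 h12 x hx1 hx2
    have heq := trace_unique (hpg1 _ (hw1 T1 h1)) (hpg1 _ (hw1 T2 h2)) hx1 hx2
    apply h12
    rw [← hDtr T1 h1, ← hDtr T2 h2, heq]
  have hvdX' : ∀ T1 ∈ 𝒯, ∀ T2 ∈ 𝒯, T1 ≠ T2 → ∀ x,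
      x ∈ edgeVerts (edgeComponent X' (w T1)) →
      x ∈ edgeVerts (edgeComponent X' (w T2)) → False := by
    intro T1 h1 T2 h2 h12 x hx1 hx2
    have heq := trace_unique ((hw1 T1 h1).2) ((hw1 T2 h2).2) hx1 hx2
    apply h12
    rw [← hD'tr T1 h1, ← hD'tr T2 h2, heq]
  -- the exchange count
  have hcount := union_count 𝒯 (Set.toFinite _)
    (fun T => edgeComponent X (pg (w T))) (fun T => edgeComponent X' (w T))
    (fun T hT => matched_size hXnl hX'nl hX hX' (hpg1 (w T) (hw1 T hT)) ((hw1 T hT).2)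
      (hpg3 (w T) (hw1 T hT)))
    (by
      intro T1 h1 T2 h2 h12
      constructor
      · rw [Set.disjoint_left]
        intro g hg1 hg2
        obtain ⟨p, q, rfl⟩ := exists_pair g
        exact hvdX T1 h1 T2 h2 h12 p ⟨_, hg1, by simp⟩ ⟨_, hg2, by simp⟩
      · rw [Set.disjoint_left]
        intro x hx1 hx2
        exact absurd hx2 (fun h => hvdX T1 h1 T2 h2 h12 x hx1 h))
    (by
      intro T1 h1 T2 h2 h12
      constructor
      · rw [Set.disjoint_left]
        intro g hg1 hg2
        obtain ⟨p, q, rfl⟩ := exists_pair g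
        exact hvdX' T1 h1 T2 h2 h12 p ⟨_, hg1, by simp⟩ ⟨_, hg2, by simp⟩
      · rw [Set.disjoint_left]
        intro x hx1 hx2
        exact absurd hx2 (fun h => hvdX' T1 h1 T2 h2 h12 x hx1 h))
  rw [← hAeq, ← hA'eq] at hcount
  -- final arithmetic
  have hKcard : Kb.ncard = B.ncard + A'.ncard := by
    rw [hKbsplit]
    exact Set.ncard_union_eq hBA' (Set.toFinite _) (Set.toFinite _)
  have hScard : (B ∪ A).ncard = B.ncard + A.ncard :=
    Set.ncard_union_eq hBA (Set.toFinite _) (Set.toFinite _)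
  have hVK : (edgeVerts Kb).ncard + (edgeVerts B ∩ edgeVerts A').ncard
      = (edgeVerts B).ncard + (edgeVerts A').ncard := by
    rw [hKbsplit, edgeVerts_union]
    exact Set.ncard_union_add_ncard_inter _ _ (Set.toFinite _) (Set.toFinite _)
  have hVS : (edgeVerts (B ∪ A)).ncard + (edgeVerts B ∩ edgeVerts A).ncard
      = (edgeVerts B).ncard + (edgeVerts A).ncard := by
    rw [edgeVerts_union]
    exact Set.ncard_union_add_ncard_inter _ _ (Set.toFinite _) (Set.toFinite _)
  have hoverc : (edgeVerts B ∩ edgeVerts A).ncard = (edgeVerts B ∩ edgeVerts A').ncard := by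
    rw [hover]
  omega
end BC

/-- independent subsets of U with equal signatures are equivalent under ∼_U. -/
theorem bicircular_signature_sim {α : Type*} [Fintype α] (G : SimpleGraph α)
    (M : Matroid (Sym2 α)) (hM : IsBicircular G M)
    (U V : Set (Sym2 α)) (hUV : U ∪ V = G.edgeSet) (hdisj : Disjoint U V)
    (X X' : Set (Sym2 α)) (hXU : X ⊆ U) (hX'U : X' ⊆ U)
    (hX : M.Indep X) (hX' : M.Indep X')
    (hsig : bicircSig {x : α | (∃ e ∈ U, x ∈ e) ∧ ∃ e ∈ V, x ∈ e} X
          = bicircSig {x : α | (∃ e ∈ U, x ∈ e) ∧ ∃ e ∈ V, x ∈ e} X') :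
    ∀ Z ⊆ V, (M.Indep (X ∪ Z) ↔ M.Indep (X' ∪ Z)) := by
  intro Z hZV
  have hnl : ∀ e ∈ U ∪ V, ¬ e.IsDiag := by
    intro e he
    rw [hUV] at he
    exact G.not_isDiag_of_mem_edgeSet he
  have hXE : X ⊆ G.edgeSet := by
    rw [← hUV]; exact fun x hx => Or.inl (hXU hx)
  have hX'E : X' ⊆ G.edgeSet := by
    rw [← hUV]; exact fun x hx => Or.inl (hX'U hx)
  have hXZE : X ∪ Z ⊆ G.edgeSet := by
    rw [← hUV]
    rintro x (hx | hx)
    · exact Or.inl (hXU hx)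
    · exact Or.inr (hZV hx)
  have hX'ZE : X' ∪ Z ⊆ G.edgeSet := by
    rw [← hUV]
    rintro x (hx | hx)
    · exact Or.inl (hX'U hx)
    · exact Or.inr (hZV hx)
  have hXbi : BicircIndep X := (hM.2 X hXE).1 hX
  have hX'bi : BicircIndep X' := (hM.2 X' hX'E).1 hX'
  constructor
  · intro h
    have hb : BicircIndep (X ∪ Z) := (hM.2 _ hXZE).1 h
    have hb' : BicircIndep (X' ∪ Z) :=
      BC.main_swap U V X X' Z hnl hdisj hXU hX'U hZV hXbi hX'bi hsig hb
    exact (hM.2 _ hX'ZE).2 hb'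
  · intro h
    have hb : BicircIndep (X' ∪ Z) := (hM.2 _ hX'ZE).1 h
    have hb' : BicircIndep (X ∪ Z) :=
      BC.main_swap U V X' X Z hnl hdisj hX'U hXU hZV hX'bi hXbi hsig.symm hb
    exact (hM.2 _ hXZE).2 hb'
end

section
/- Let H be an infinite group and let m and n be positive integers. There exist disjoint subsets A, B ⊆ H with |A| = m and |B| = n such that the set {ab : a ∈ A, b ∈ B} has exactly mn elements and is disjoint from A ∪ B. -/
open Set

/-- in an infinite group there are disjoint sets A, B of sizes m and n whose
product set has exactly mn elements and avoids A ∪ B. -/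
theorem infinite_group_product_sets {H : Type*} [Group H] [Infinite H]
    (m n : ℕ) (hm : 0 < m) (hn : 0 < n) :
    ∃ A B : Set H, A.Finite ∧ B.Finite ∧ Disjoint A B ∧
      A.ncard = m ∧ B.ncard = n ∧
      (Set.image2 (fun a b => a * b) A B).ncard = m * n ∧
      Disjoint (Set.image2 (fun a b => a * b) A B) (A ∪ B) := by
  classical
  obtain ⟨A, hA1, hAcard⟩ :=
    Set.Infinite.exists_subset_card_eq ((Set.finite_singleton (1 : H)).infinite_compl) m
  have h1A : (1 : H) ∉ A := fun h => hA1 h rfl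
  have key : ∀ k : ℕ, ∃ B : Finset H,
      B.card = k ∧ Disjoint A B ∧
      (∀ a ∈ A, ∀ b ∈ B, ∀ a' ∈ A, ∀ b' ∈ B, a * b = a' * b' → a = a' ∧ b = b') ∧
      (∀ a ∈ A, ∀ b ∈ B, a * b ∉ A ∧ a * b ∉ B) := by
    intro k
    induction k with
    | zero => exact ⟨∅, rfl, by simp, by simp, by simp⟩
    | succ k ih =>
      obtain ⟨B, hBcard, hdisj, hP, hQ⟩ := ih
      set S : Set H := ↑A ∪ ↑B ∪ {1} ∪
        Set.image2 (fun a a' => a⁻¹ * a') ↑A ↑A ∪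
        Set.image2 (fun x b' => x * b')
          (Set.image2 (fun a a' => a⁻¹ * a') (↑A : Set H) ↑A) ↑B ∪
        Set.image2 (fun a b' => a⁻¹ * b') ↑A ↑B ∪
        Set.image2 (fun a b' => a * b') ↑A ↑B with hSdef
      have hSfin : S.Finite := by
        apply Set.Finite.union
        apply Set.Finite.union
        apply Set.Finite.union
        apply Set.Finite.union
        apply Set.Finite.union
        apply Set.Finite.union
        exact A.finite_toSet
        exact B.finite_toSet
        exact Set.finite_singleton 1
        exact Set.Finite.image2 _ A.finite_toSet A.finite_toSet
        exact Set.Finite.image2 _ (Set.Finite.image2 _ A.finite_toSet A.finite_toSet) B.finite_toSet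
        exact Set.Finite.image2 _ A.finite_toSet B.finite_toSet
        exact Set.Finite.image2 _ A.finite_toSet B.finite_toSet
      obtain ⟨b, hb⟩ := hSfin.infinite_compl.nonempty
      simp only [hSdef, Set.mem_compl_iff, Set.mem_union, Set.mem_image2, Set.mem_singleton_iff,
        Finset.mem_coe, not_or, not_exists] at hb
      obtain ⟨⟨⟨⟨⟨⟨hbA, hbB⟩, hb1⟩, hb4⟩, hb5⟩, hb6⟩, hb7⟩ := hb
      -- rephrase the image conditions
      have hb4' : ∀ a ∈ A, ∀ a' ∈ A, b ≠ a⁻¹ * a' := by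
        intro a ha a' ha' h
        exact hb4 a ⟨ha, a', ha', h.symm⟩
      have hb5' : ∀ a ∈ A, ∀ a' ∈ A, ∀ b' ∈ B, b ≠ a⁻¹ * a' * b' := by
        intro a ha a' ha' b' hb' h
        exact hb5 (a⁻¹ * a') ⟨⟨a, ha, a', ha', rfl⟩, b', hb', h.symm⟩
      have hb6' : ∀ a ∈ A, ∀ b' ∈ B, b ≠ a⁻¹ * b' := by
        intro a ha b' hb' h
        exact hb6 a ⟨ha, b', hb', h.symm⟩
      have hb7' : ∀ a ∈ A, ∀ b' ∈ B, b ≠ a * b' := by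
        intro a ha b' hb' h
        exact hb7 a ⟨ha, b', hb', h.symm⟩
      refine ⟨insert b B, ?_, ?_, ?_, ?_⟩
      · rw [Finset.card_insert_of_notMem hbB, hBcard]
      · rw [Finset.disjoint_insert_right]
        exact ⟨hbA, hdisj⟩
      · intro a ha b1 hb1' a' ha' b2 hb2' heq
        rcases Finset.mem_insert.1 hb1' with rfl | hb1'' <;>
          rcases Finset.mem_insert.1 hb2' with h2 | hb2''
        · constructor
          · exact mul_right_cancel (h2 ▸ heq)
          · exact h2.symm
        · exfalso
          apply hb5' a ha a' ha' b2 hb2''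
          rw [mul_assoc]
          exact eq_inv_mul_iff_mul_eq.mpr heq
        · exfalso
          subst h2
          apply hb5' a' ha' a ha b1 hb1''
          rw [mul_assoc]
          exact eq_inv_mul_iff_mul_eq.mpr heq.symm
        · exact hP a ha b1 hb1'' a' ha' b2 hb2'' heq
      · intro a ha b1 hb1'
        rcases Finset.mem_insert.1 hb1' with rfl | hb1''
        · constructor
          · intro hmem
            exact hb4' a ha (a * b1) hmem (by group)
          · intro hmem
            rcases Finset.mem_insert.1 hmem with h2 | h2
            · exact h1A ((mul_eq_right.mp h2) ▸ ha)
            · exact hb6' a ha (a * b1) h2 (by group)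
        · constructor
          · exact (hQ a ha b1 hb1'').1
          · intro hmem
            rcases Finset.mem_insert.1 hmem with h2 | h2
            · exact hb7' a ha b1 hb1'' h2.symm
            · exact (hQ a ha b1 hb1'').2 h2
  obtain ⟨B, hBcard, hdisj, hP, hQ⟩ := key n
  refine ⟨↑A, ↑B, A.finite_toSet, B.finite_toSet, Finset.disjoint_coe.mpr hdisj,
    by rw [Set.ncard_coe_finset, hAcard], by rw [Set.ncard_coe_finset, hBcard], ?_, ?_⟩
  · rw [← Finset.coe_image₂, Set.ncard_coe_finset]
    rw [← hAcard, ← hBcard]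
    rw [Finset.card_image₂_iff]
    rintro ⟨a, b1⟩ hab ⟨a', b2⟩ hab' heq
    simp only [Finset.coe_product, Set.mem_prod, Finset.mem_coe] at hab hab'
    obtain ⟨h1, h2⟩ := hP a hab.1 b1 hab.2 a' hab'.1 b2 hab'.2 heq
    simp [h1, h2]
  · rw [Set.disjoint_left]
    rintro x ⟨a, ha, b1, hb1, rfl⟩ hmem
    rcases hmem with h | h
    · exact (hQ a ha b1 hb1).1 h
    · exact (hQ a ha b1 hb1).2 h
end
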